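/- Let (Ω, ρ) be a finite metric space with n points, endowed with the uniform probability measure μ, and let f : Ω → ℝ. Then the strong average slope of f is at most 2·log(n) times its weak average slope: E_{X∼μ}[Λ_f(X)] ≤ 2·log(n)·sup_{t>0} t·μ{x : Λ_f(x) ≥ t}, where Λ_f(x) = sup_{x'≠x} |f(x)−f(x')|/ρ(x,x'). -/

import Mathlib

open Finset

/-- Sum of reciprocals of `max (m-i) 2` is at most `2 log m` for `m ≥ 2`. -/
lemma aux_recip_sum_le (m : ℕ) (hm : 2 ≤ m) :
    ∑ i ∈ Finset.range m, (1 : ℝ) / ((max (m - i) 2 : ℕ) : ℝ) ≤ 2 * Real.log m := by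
  have h1 : ∑ i ∈ Finset.range m, (1 : ℝ) / ((max (m - i) 2 : ℕ) : ℝ)
      = ∑ i ∈ Finset.range m, (1 : ℝ) / ((max (i + 1) 2 : ℕ) : ℝ) := by
    rw [← Finset.sum_range_reflect (fun i => (1 : ℝ) / ((max (i + 1) 2 : ℕ) : ℝ)) m]
    refine Finset.sum_congr rfl fun i hi => ?_
    have hi' : i < m := Finset.mem_range.mp hi
    congr 2
    omega
  have h2 : ∑ i ∈ Finset.range m, (1 : ℝ) / ((max (i + 1) 2 : ℕ) : ℝ)
      = 1 / 2 + ∑ i ∈ Finset.range (m - 1), (1 : ℝ) / ((i : ℝ) + 2) := by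
    obtain ⟨k, rfl⟩ : ∃ k, m = k + 1 := ⟨m - 1, by omega⟩
    rw [Finset.sum_range_succ' (fun i => (1 : ℝ) / ((max (i + 1) 2 : ℕ) : ℝ)) k]
    simp only [Nat.add_sub_cancel]
    have hterm : ∀ i ∈ Finset.range k,
        (1 : ℝ) / ((max (i + 1 + 1) 2 : ℕ) : ℝ) = 1 / ((i : ℝ) + 2) := by
      intro i hi
      have : max (i + 1 + 1) 2 = i + 2 := by omega
      rw [this]
      push_cast
      ring
    rw [Finset.sum_congr rfl hterm, add_comm]
    norm_num
  have h3 : ∑ i ∈ Finset.range (m - 1), (1 : ℝ) / ((i : ℝ) + 2) ≤ Real.log m := by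
    have hh : (harmonic m : ℝ) = 1 + ∑ i ∈ Finset.range (m - 1), (1 : ℝ) / ((i : ℝ) + 2) := by
      obtain ⟨k, rfl⟩ : ∃ k, m = k + 1 := ⟨m - 1, by omega⟩
      rw [harmonic]
      push_cast
      rw [Finset.sum_range_succ' (fun i => ((i : ℝ) + 1)⁻¹) k, add_comm]
      congr 1
      · norm_num
      · refine Finset.sum_congr rfl fun i hi => ?_
        rw [one_div]
        push_cast
        ring_nf
    have := harmonic_le_one_add_log m
    rw [hh] at this
    linarith
  have h4 : (1 : ℝ) / 2 ≤ Real.log m := by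
    have h2' : Real.log 2 ≤ Real.log m := by
      apply Real.log_le_log (by norm_num)
      exact_mod_cast hm
    have := Real.log_two_gt_d9
    linarith
  rw [h1, h2]
  linarith

theorem strong_avg_slope_le_weak_avg_slope {Ω : Type*} [MetricSpace Ω] [Fintype Ω]
    (hn : 2 ≤ Fintype.card Ω) (f : Ω → ℝ) :
    let n : ℝ := Fintype.card Ω
    let Λ : Ω → ℝ := fun x => sSup {s : ℝ | ∃ y : Ω, y ≠ x ∧ s = |f x - f y| / dist x y}
    (∑ x : Ω, Λ x) / n ≤
      2 * Real.log n *
        sSup {w : ℝ | ∃ t : ℝ, 0 < t ∧ w = t * ((Nat.card {x : Ω | t ≤ Λ x} : ℝ) / n)} := by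
  classical
  intro n Λ
  rw [show n = ((Fintype.card Ω : ℕ) : ℝ) from rfl]
  set m := Fintype.card Ω with hmdef
  have hn1 : 1 < m := hn
  have hm0 : (0 : ℝ) < (m : ℝ) := by exact_mod_cast Nat.lt_of_lt_of_le Nat.zero_lt_two hn
  have : Nonempty Ω := Fintype.card_pos_iff.mp (by omega)
  -- basic facts about the slope sets
  have hfin : ∀ x : Ω, {s : ℝ | ∃ y : Ω, y ≠ x ∧ s = |f x - f y| / dist x y}.Finite := by
    intro x
    apply Set.Finite.subset (Set.finite_range fun y : Ω => |f x - f y| / dist x y)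
    rintro s ⟨y, -, rfl⟩
    exact ⟨y, rfl⟩
  have hbdd : ∀ x : Ω, BddAbove {s : ℝ | ∃ y : Ω, y ≠ x ∧ s = |f x - f y| / dist x y} :=
    fun x => (hfin x).bddAbove
  have hne : ∀ x : Ω, {s : ℝ | ∃ y : Ω, y ≠ x ∧ s = |f x - f y| / dist x y}.Nonempty := by
    intro x
    obtain ⟨y, hy⟩ := Fintype.exists_ne_of_one_lt_card hn1 x
    exact ⟨_, y, hy, rfl⟩
  have hle : ∀ x y : Ω, y ≠ x → |f x - f y| / dist x y ≤ Λ x :=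
    fun x y hy => le_csSup (hbdd x) ⟨y, hy, rfl⟩
  have hΛ0 : ∀ x : Ω, 0 ≤ Λ x := by
    intro x
    obtain ⟨y, hy⟩ := Fintype.exists_ne_of_one_lt_card hn1 x
    exact le_trans (by positivity) (hle x y hy)
  have hΛmem : ∀ x : Ω, Λ x ∈ {s : ℝ | ∃ y : Ω, y ≠ x ∧ s = |f x - f y| / dist x y} :=
    fun x => (hne x).csSup_mem (hfin x)
  -- two points attaining the maximum of Λ
  obtain ⟨a, -, hamax'⟩ := Finset.exists_max_image Finset.univ Λ Finset.univ_nonempty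
  have hamax : ∀ x : Ω, Λ x ≤ Λ a := fun x => hamax' x (Finset.mem_univ x)
  obtain ⟨b, hba, hab⟩ := hΛmem a
  have hbmax : Λ a ≤ Λ b := by
    rw [hab, abs_sub_comm, dist_comm]
    exact hle b a (fun h => hba h.symm)
  have hab' : a ≠ b := fun h => hba h.symm
  -- cardinality of superlevel sets
  have hcard : ∀ t : ℝ,
      (Nat.card {x : Ω | t ≤ Λ x} : ℕ) = (Finset.univ.filter fun x => t ≤ Λ x).card := by
    intro t
    rw [Nat.card_eq_fintype_card]
    exact Fintype.card_subtype _
  -- the weak-slope set T and its sup W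
  set T : Set ℝ :=
    {w : ℝ | ∃ t : ℝ, 0 < t ∧ w = t * ((Nat.card {x : Ω | t ≤ Λ x} : ℝ) / ((m : ℕ) : ℝ))} with hT
  set W := sSup T with hWdef
  have hTbdd : BddAbove T := by
    refine ⟨Λ a, ?_⟩
    rintro w ⟨t, ht, rfl⟩
    rcases Nat.eq_zero_or_pos (Nat.card {x : Ω | t ≤ Λ x}) with h0 | hpos
    · rw [h0]
      simpa using hΛ0 a
    · obtain ⟨⟨x, hx⟩⟩ := (Nat.card_pos_iff.mp hpos).1
      have hk : ((Nat.card {x : Ω | t ≤ Λ x} : ℝ) / (m : ℝ)) ≤ 1 := by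
        rw [div_le_one hm0]
        have : Nat.card {x : Ω | t ≤ Λ x} ≤ m := by
          rw [hcard]
          exact le_trans (Finset.card_filter_le _ _) (by simp; exact le_rfl)
        exact_mod_cast this
      calc t * ((Nat.card {x : Ω | t ≤ Λ x} : ℝ) / (m : ℝ)) ≤ t * 1 := by
            apply mul_le_mul_of_nonneg_left hk ht.le
        _ = t := mul_one t
        _ ≤ Λ x := hx
        _ ≤ Λ a := hamax x
  have hW0 : 0 ≤ W := by
    have h1 : (1 : ℝ) * ((Nat.card {x : Ω | (1:ℝ) ≤ Λ x} : ℝ) / (m : ℝ)) ∈ T :=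
      ⟨1, one_pos, rfl⟩
    have := le_csSup hTbdd h1
    have h0 : (0:ℝ) ≤ (1 : ℝ) * ((Nat.card {x : Ω | (1:ℝ) ≤ Λ x} : ℝ) / (m : ℝ)) := by positivity
    linarith
  have hWt : ∀ t : ℝ, 0 < t →
      t * (((Finset.univ.filter fun x => t ≤ Λ x).card : ℝ)) ≤ (m : ℝ) * W := by
    intro t ht
    have hmem : t * ((Nat.card {x : Ω | t ≤ Λ x} : ℝ) / (m : ℝ)) ∈ T := ⟨t, ht, rfl⟩
    have h := le_csSup hTbdd hmem
    rw [hcard, ← hWdef] at h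
    rw [← mul_div_assoc, div_le_iff₀ hm0] at h
    linarith [h]
  -- sorting
  set e := (Fintype.equivFin Ω).symm with hedef
  set g : Fin m → ℝ := fun i => Λ (e i) with hgdef
  set σ := Tuple.sort g with hσdef
  have hmono : Monotone (g ∘ σ) := Tuple.monotone_sort g
  have hsum : ∑ x : Ω, Λ x = ∑ j : Fin m, g (σ j) :=
    ((Equiv.sum_comp σ g).trans (Equiv.sum_comp e Λ)).symm
  -- rank bound
  have hrank : ∀ j : Fin m,
      (max (m - j.val) 2 : ℕ) ≤ (Finset.univ.filter fun x => g (σ j) ≤ Λ x).card := by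
    intro j
    refine max_le ?_ ?_
    · have hIci : (Finset.Ici j).card = m - j.val := by
        rw [Fin.card_Ici]
      rw [← hIci]
      apply Finset.card_le_card_of_injOn (fun i => e (σ i))
      · intro i hi
        rw [Finset.mem_coe, Finset.mem_filter]
        exact ⟨Finset.mem_univ _, hmono (Finset.mem_Ici.mp hi)⟩
      · exact (e.injective.comp σ.injective).injOn
    · have hsub : ({a, b} : Finset Ω) ⊆ Finset.univ.filter fun x => g (σ j) ≤ Λ x := by
        intro x hx
        rw [Finset.mem_filter]
        refine ⟨Finset.mem_univ _, ?_⟩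
        have hga : g (σ j) ≤ Λ a := hamax _
        rcases Finset.mem_insert.mp hx with rfl | hx
        · exact hga
        · rw [Finset.mem_singleton.mp hx]
          exact le_trans hga hbmax
      calc 2 = ({a, b} : Finset Ω).card := (Finset.card_pair hab').symm
        _ ≤ _ := Finset.card_le_card hsub
  -- per-index bound
  have hjb : ∀ j : Fin m,
      g (σ j) ≤ (m : ℝ) * W * ((1 : ℝ) / ((max (m - j.val) 2 : ℕ) : ℝ)) := by
    intro j
    have hc2 : (0 : ℝ) < ((max (m - j.val) 2 : ℕ) : ℝ) := by
      have : (2 : ℕ) ≤ max (m - j.val) 2 := le_max_right _ _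
      exact_mod_cast Nat.lt_of_lt_of_le Nat.zero_lt_two this
    rcases le_or_gt (g (σ j)) 0 with h | h
    · refine h.trans ?_
      have : 0 ≤ (m : ℝ) * W := mul_nonneg hm0.le hW0
      positivity
    · rw [mul_one_div, le_div_iff₀ hc2]
      calc g (σ j) * ((max (m - j.val) 2 : ℕ) : ℝ)
          ≤ g (σ j) * ((Finset.univ.filter fun x => g (σ j) ≤ Λ x).card : ℝ) := by
            apply mul_le_mul_of_nonneg_left _ h.le
            exact_mod_cast hrank j
        _ ≤ (m : ℝ) * W := hWt _ h
  -- put everything together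
  have hsum2 : ∑ x : Ω, Λ x ≤ (m : ℝ) * W * (2 * Real.log m) := by
    rw [hsum]
    calc ∑ j : Fin m, g (σ j)
        ≤ ∑ j : Fin m, (m : ℝ) * W * ((1 : ℝ) / ((max (m - j.val) 2 : ℕ) : ℝ)) :=
          Finset.sum_le_sum fun j _ => hjb j
      _ = (m : ℝ) * W * ∑ i ∈ Finset.range m, (1 : ℝ) / ((max (m - i) 2 : ℕ) : ℝ) := by
          rw [← Finset.mul_sum]
          congr 1
          exact Fin.sum_univ_eq_sum_range (fun i => (1 : ℝ) / ((max (m - i) 2 : ℕ) : ℝ)) m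
      _ ≤ (m : ℝ) * W * (2 * Real.log m) := by
          apply mul_le_mul_of_nonneg_left (aux_recip_sum_le m hn) (mul_nonneg hm0.le hW0)
  rw [div_le_iff₀ hm0]
  calc ∑ x : Ω, Λ x ≤ (m : ℝ) * W * (2 * Real.log m) := hsum2
    _ = 2 * Real.log m * W * m := by ring
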